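/- Let A be a nonnegative primitive tensor of order m and dimension n, and suppose M(A)_{jj} > 0 for some j ∈ [n]. Then the j-primitive degree satisfies γ_j(A) ≤ n−1; that is, M(A^{n−1})_{uj} > 0 for all u ∈ [n]. -/
import Mathlib


open Finset

/- An order-`m` dimension-`n` nonnegative tensor is encoded as
`A : Fin n → (Fin (m-1) → Fin n) → ℝ`, with `A i t = a_{i t₁ ⋯ t_{m-1}}`. -/

/-- The majorization matrix `M(A)_{ij} = a_{ij⋯j}`. -/
def maj (n m : ℕ) (A : Fin n → (Fin (m-1) → Fin n) → ℝ) :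
    Matrix (Fin n) (Fin n) ℝ :=
  fun i j => A i (fun _ => j)

/-- The majorization matrices of the Shao-product powers of `A`:
`majPow n m A k = M(A^k)`, via the recursion
`M(A^{k+1})_{uj} = Σ_{j₂,…,j_m} a_{u j₂ ⋯ j_m} M(A^k)_{j₂ j} ⋯ M(A^k)_{j_m j}`
(with `M(A^0)` the identity, so that `majPow n m A 1 = maj n m A`). -/
def majPow (n m : ℕ) (A : Fin n → (Fin (m-1) → Fin n) → ℝ) :
    ℕ → Matrix (Fin n) (Fin n) ℝ
  | 0 => 1
  | k + 1 => fun u j =>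
      ∑ t : Fin (m-1) → Fin n, A u t * ∏ i, majPow n m A k (t i) j

/-- `A` is primitive: `M(A^r) > 0` entrywise for some positive `r`. -/
def Primitive (n m : ℕ) (A : Fin n → (Fin (m-1) → Fin n) → ℝ) : Prop :=
  ∃ r, 0 < r ∧ ∀ u j, 0 < majPow n m A r u j

lemma majPow_nonneg (n m : ℕ) (A : Fin n → (Fin (m-1) → Fin n) → ℝ)
    (hA : ∀ u t, 0 ≤ A u t) : ∀ k u v, 0 ≤ majPow n m A k u v := by
  intro k
  induction k with
  | zero =>
    intro u v
    simp only [majPow, Matrix.one_apply]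
    split <;> norm_num
  | succ k ih =>
    intro u v
    apply Finset.sum_nonneg
    intro t _
    exact mul_nonneg (hA u t) (Finset.prod_nonneg fun i _ => ih (t i) v)

lemma majPow_succ_pos_iff (n m : ℕ) (A : Fin n → (Fin (m-1) → Fin n) → ℝ)
    (hA : ∀ u t, 0 ≤ A u t) (k : ℕ) (u j : Fin n) :
    0 < majPow n m A (k+1) u j ↔
      ∃ t, 0 < A u t ∧ ∀ i, 0 < majPow n m A k (t i) j := by
  have hnn := majPow_nonneg n m A hA k
  constructor
  · intro h
    by_contra hc
    push_neg at hc
    have hz : majPow n m A (k+1) u j = 0 := by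
      show (∑ t : Fin (m-1) → Fin n, A u t * ∏ i, majPow n m A k (t i) j) = 0
      apply Finset.sum_eq_zero
      intro t _
      rcases (hA u t).eq_or_lt with h0 | h0
      · rw [← h0, zero_mul]
      · obtain ⟨i, hi⟩ := hc t h0
        have hzero : majPow n m A k (t i) j = 0 := le_antisymm hi (hnn _ _)
        rw [Finset.prod_eq_zero (Finset.mem_univ i) hzero, mul_zero]
    rw [hz] at h
    exact lt_irrefl _ h
  · rintro ⟨t, ht, hti⟩
    show 0 < ∑ t : Fin (m-1) → Fin n, A u t * ∏ i, majPow n m A k (t i) j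
    exact Finset.sum_pos'
      (fun s _ => mul_nonneg (hA u s) (Finset.prod_nonneg fun i _ => hnn _ _))
      ⟨t, Finset.mem_univ t, mul_pos ht (Finset.prod_pos fun i _ => hti i)⟩

/-- if `M(A)_{jj} > 0` then `γ_j(A) ≤ n-1`,
i.e. `M(A^{n-1})_{uj} > 0` for all `u`. -/
theorem stmt_11 (n m : ℕ) (hm : 2 ≤ m)
    (A : Fin n → (Fin (m-1) → Fin n) → ℝ) (hA : ∀ u t, 0 ≤ A u t)
    (hprim : Primitive n m A) (j : Fin n) (hjj : 0 < maj n m A j j) :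
    ∀ u : Fin n, 0 < majPow n m A (n - 1) u j := by
  classical
  set P : ℕ → Fin n → Prop := fun k u => 0 < majPow n m A k u j with hPdef
  have step : ∀ k u, P (k+1) u ↔ ∃ t, 0 < A u t ∧ ∀ i, P k (t i) :=
    fun k u => majPow_succ_pos_iff n m A hA k u j
  have hP0 : ∀ u, P 0 u ↔ u = j := by
    intro u
    constructor
    · intro h
      by_contra hne
      simp only [hPdef, majPow, Matrix.one_apply, hne, if_false] at h
      exact lt_irrefl _ h
    · intro h
      subst h
      simp only [hPdef, majPow, Matrix.one_apply, if_pos rfl]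
      norm_num
  have mono : ∀ k u, P k u → P (k+1) u := by
    intro k
    induction k with
    | zero =>
      intro u hu
      rw [hP0] at hu
      rw [hu, step]
      exact ⟨fun _ => j, hjj, fun i => (hP0 j).2 rfl⟩
    | succ k ih =>
      intro u hu
      rw [step] at hu ⊢
      obtain ⟨t, ht, hti⟩ := hu
      exact ⟨t, ht, fun i => ih _ (hti i)⟩
  have mono' : ∀ k l, k ≤ l → ∀ u, P k u → P l u := by
    intro k l hkl
    induction l, hkl using Nat.le_induction with
    | base => exact fun u h => h
    | succ l hl ih => exact fun u h => mono l u (ih u h)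
  have stab : ∀ k, (∀ u, P (k+1) u → P k u) →
      ∀ l, k ≤ l → ∀ u, P l u → P k u := by
    intro k hk l hkl
    induction l, hkl using Nat.le_induction with
    | base => exact fun u h => h
    | succ l hl ih =>
      intro u hu
      rw [step] at hu
      obtain ⟨t, ht, hti⟩ := hu
      apply hk
      rw [step]
      exact ⟨t, ht, fun i => ih _ (hti i)⟩
  have strict : ∀ k, (∃ u, ¬ P k u) → ∃ u, P (k+1) u ∧ ¬ P k u := by
    intro k ⟨u0, hu0⟩
    by_contra hc
    push_neg at hc
    obtain ⟨r, hr, hprimr⟩ := hprim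
    have : P k u0 :=
      stab k hc (max k r) (le_max_left k r) u0
        (mono' r (max k r) (le_max_right k r) u0 (hprimr u0 j))
    exact hu0 this
  set T : ℕ → Finset (Fin n) := fun k => Finset.univ.filter (fun u => P k u)
    with hTdef
  have key : ∀ k, (∀ u, P k u) ∨ k + 1 ≤ (T k).card := by
    intro k
    induction k with
    | zero =>
      right
      exact Finset.card_pos.2 ⟨j, by simp [hTdef, (hP0 j).2 rfl]⟩
    | succ k ih =>
      by_cases hall : ∀ u, P k u
      · left
        exact fun u => mono k u (hall u)
      · push_neg at hall
        rcases ih with h | h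
        · exact absurd (fun u => h u) (by push_neg; exact hall)
        · right
          obtain ⟨u1, h1, h2⟩ := strict k hall
          have hss : T k ⊂ T (k+1) := by
            constructor
            · intro x hx
              simp only [hTdef, Finset.mem_filter, Finset.mem_univ,
                true_and] at hx ⊢
              exact mono k x hx
            · intro hsub
              have : u1 ∈ T (k+1) := by
                simp [hTdef, h1]
              have := hsub this
              simp only [hTdef, Finset.mem_filter, Finset.mem_univ,
                true_and] at this
              exact h2 this
          have := Finset.card_lt_card hss
          omega
  intro u
  rcases key (n - 1) with h | h
  · exact h u
  · have hn : 0 < n := j.pos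
    have hle : (T (n-1)).card ≤ n := by
      have := Finset.card_le_univ (T (n-1))
      simpa using this
    have hcard : (T (n-1)).card = n := by omega
    have huniv : T (n-1) = Finset.univ :=
      Finset.eq_univ_of_card _ (by simpa using hcard)
    have : u ∈ T (n-1) := huniv ▸ Finset.mem_univ u
    simpa [hTdef] using this
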